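/- Let V be an oriented 4-dimensional real inner product space with orthogonal complex structure J inducing the orientation, fundamental form Omega, and let phi be a J-anti-invariant self-dual 2-form with <phi, phi> = 2 (inner product on 2-forms normalized so that |Omega|^2 = 2). Define Jphi by (Jphi)(X,Y) = -phi(JX, Y). Then {Omega/√2, phi/√2, Jphi/√2} is an orthonormal basis of Lambda^+, and Jphi is again J-anti-invariant and self-dual. -/

import Mathlib

open RealInnerProductSpace

noncomputable section

/-- The oriented Euclidean 4-space. -/
abbrev E : Type := EuclideanSpace ℝ (Fin 4)

/-- The standard (oriented, orthonormal) basis of `E`. -/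
def e (i : Fin 4) : E := EuclideanSpace.single i 1

/-- `φ : E → E → ℝ` is a 2-form: bilinear and alternating. -/
def IsTwoForm (φ : E → E → ℝ) : Prop :=
  (∀ x y z : E, φ (x + y) z = φ x z + φ y z) ∧
  (∀ (c : ℝ) (x y : E), φ (c • x) y = c * φ x y) ∧
  (∀ x y : E, φ x y = -φ y x)

/-- A 2-form is self-dual (`*φ = φ` for the standard orientation) iff
`φ₁₂ = φ₃₄`, `φ₁₃ = φ₄₂`, `φ₁₄ = φ₂₃`. -/
def SelfDual (φ : E → E → ℝ) : Prop :=
  φ (e 0) (e 1) = φ (e 2) (e 3) ∧ φ (e 0) (e 2) = φ (e 3) (e 1) ∧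
    φ (e 0) (e 3) = φ (e 1) (e 2)

/-- The inner product on 2-forms, normalized so that `|Ω|² = 2`. -/
def formInner (φ ψ : E → E → ℝ) : ℝ :=
  (1 / 2) * ∑ i : Fin 4, ∑ j : Fin 4, φ (e i) (e j) * ψ (e i) (e j)

set_option maxHeartbeats 1600000
set_option maxRecDepth 4000
open Matrix

lemma e_apply (i j : Fin 4) : (e i) j = if j = i then 1 else 0 := by
  simp [e]

lemma coord_inner (x : E) (k : Fin 4) : ⟪x, e k⟫ = x k := by
  simp [e, EuclideanSpace.inner_single_right (𝕜 := ℝ) k 1 x]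

lemma inner_sum' (x y : E) : ⟪x, y⟫ = ∑ i, x i * y i := by
  simp [PiLp.inner_apply, RCLike.inner_apply]
  exact Finset.sum_congr rfl fun i _ => mul_comm _ _

lemma E_decomp (x : E) : x = ∑ i, x i • e i := by
  ext j
  rw [WithLp.ofLp_sum, Finset.sum_apply]
  simp [e, EuclideanSpace.single_apply]

lemma tf_expand {φ : E → E → ℝ} (hφ : IsTwoForm φ) (x y : E) :
    φ x y = ∑ i, ∑ j, x i * y j * φ (e i) (e j) := by
  obtain ⟨ha, hs, halt⟩ := hφ
  have ha2 : ∀ x y z : E, φ x (y + z) = φ x y + φ x z := by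
    intro x y z
    rw [halt, ha, halt x y, halt x z]; ring
  have hs2 : ∀ (c : ℝ) (x y : E), φ x (c • y) = c * φ x y := by
    intro c x y
    rw [halt, hs, halt x y]; ring
  have key : ∀ (y : E) (s : Finset (Fin 4)) (g : Fin 4 → E),
      φ (∑ i ∈ s, g i) y = ∑ i ∈ s, φ (g i) y := by
    intro y s g
    let L : E →ₗ[ℝ] ℝ :=
      { toFun := fun v => φ v y
        map_add' := fun a b => ha a b y
        map_smul' := fun c a => by simpa using hs c a y }
    exact map_sum L g s
  have key2 : ∀ (x : E) (s : Finset (Fin 4)) (g : Fin 4 → E),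
      φ x (∑ i ∈ s, g i) = ∑ i ∈ s, φ x (g i) := by
    intro x s g
    let L : E →ₗ[ℝ] ℝ :=
      { toFun := fun v => φ x v
        map_add' := fun a b => ha2 x a b
        map_smul' := fun c a => by simpa using hs2 c x a }
    exact map_sum L g s
  calc φ x y = φ (∑ i, x i • e i) y := by rw [← E_decomp]
    _ = ∑ i, x i * φ (e i) y := by rw [key]; exact Finset.sum_congr rfl fun i _ => hs _ _ _
    _ = ∑ i, ∑ j, x i * y j * φ (e i) (e j) := by
        refine Finset.sum_congr rfl fun i _ => ?_
        calc x i * φ (e i) y = x i * φ (e i) (∑ j, y j • e j) := by rw [← E_decomp]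
          _ = ∑ j, x i * y j * φ (e i) (e j) := by
              rw [key2, Finset.mul_sum]
              exact Finset.sum_congr rfl fun j _ => by rw [hs2]; ring

lemma inner_e (i j : Fin 4) : ⟪(e i : E), e j⟫ = if i = j then 1 else 0 := by
  rw [inner_sum']
  rcases eq_or_ne i j with rfl | h
  · simp [e_apply, Finset.sum_ite_eq]
  · simp [e_apply, Finset.sum_ite_eq, h, Ne.symm h]

lemma tf_expand_basis {φ : E → E → ℝ} (hφ : IsTwoForm φ) (x : E) (j : Fin 4) :
    φ x (e j) = ∑ k, ⟪x, e k⟫ * φ (e k) (e j) := by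
  rw [tf_expand hφ]
  refine Finset.sum_congr rfl fun i _ => ?_
  rw [coord_inner]
  rw [Finset.sum_eq_single j]
  · simp [e_apply]
  · intro l _ hl; simp [e_apply, hl]
  · intro h; exact absurd (Finset.mem_univ j) h

lemma keyJ (a b c p q r : ℝ)
    (h1 : a*a+b*b+c*c = 1) (h2 : a*a+p*p+q*q = 1) (h3 : b*b+p*p+r*r = 1)
    (h4 : c*c+q*q+r*r = 1) (h5 : b*p+c*q = 0) (h6 : a*p - c*r = 0)
    (h7 : a*q+b*r = 0) (h8 : a*b+q*r = 0) (h9 : a*c - p*r = 0)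
    (h10 : b*c+p*q = 0) (hD : 0 < a*r - b*q + c*p) :
    p = c ∧ q = -b ∧ r = a := by
  have hr2 : r^2 = a^2 := by
    linear_combination (b*r - a*q)*h7 - (c*r + a*p)*h6 - r^2*h1 + (a^2/2)*(h2+h3+h4-h1)
  have hq2 : q^2 = b^2 := by
    linear_combination (a*q - b*r)*h7 + (c*q - b*p)*h5 - q^2*h1 + (b^2/2)*(h2+h3+h4-h1)
  have hp2 : p^2 = c^2 := by
    linear_combination (a*p + c*r)*h6 + (b*p - c*q)*h5 - p^2*h1 + (c^2/2)*(h2+h3+h4-h1)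
  have hD2 : (a*r - b*q + c*p - 1) * (a*r - b*q + c*p + 1) = 0 := by
    linear_combination a^2*hr2 + b^2*hq2 + c^2*hp2 - 2*a*b*h8 - 2*a*c*h9 - 2*b*c*h10 + (a*a+b*b+c*c+1)*h1
  have hD1 : a*r - b*q + c*p = 1 := by
    rcases mul_eq_zero.mp hD2 with h | h
    · linarith
    · linarith
  have hsum : (r-a)^2 + (q+b)^2 + (p-c)^2 = 0 := by
    linear_combination (1/2)*(h2+h3+h4-h1) + h1 - 2*hD1
  have h1' : (p-c)^2 = 0 := by nlinarith [sq_nonneg (r-a), sq_nonneg (q+b), sq_nonneg (p-c)]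
  have h2' : (q+b)^2 = 0 := by nlinarith [sq_nonneg (r-a), sq_nonneg (q+b), sq_nonneg (p-c)]
  have h3' : (r-a)^2 = 0 := by nlinarith [sq_nonneg (r-a), sq_nonneg (q+b), sq_nonneg (p-c)]
  have e1 := sq_eq_zero_iff.mp h1'
  have e2 := sq_eq_zero_iff.mp h2'
  have e3 := sq_eq_zero_iff.mp h3'
  refine ⟨by linarith, by linarith, by linarith⟩

lemma gram6 (a b c u v w : ℝ) (h1 : a*a+b*b+c*c = 1) (hu : u*u+v*v+w*w = 1)
    (hx : a*u+b*v+c*w = 0) :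
    ((b*w-c*v)*(b*w-c*v) + (c*u-a*w)*(c*u-a*w) + (a*v-b*u)*(a*v-b*u) = 1) ∧
    (a*a + u*u + (b*w-c*v)*(b*w-c*v) = 1) ∧
    (a*b + u*v + (b*w-c*v)*(c*u-a*w) = 0) ∧
    (a*c + u*w + (b*w-c*v)*(a*v-b*u) = 0) ∧
    (b*b + v*v + (c*u-a*w)*(c*u-a*w) = 1) ∧
    (b*c + v*w + (c*u-a*w)*(a*v-b*u) = 0) ∧
    (c*c + w*w + (a*v-b*u)*(a*v-b*u) = 1) := by
  have lag : (b*w-c*v)*(b*w-c*v) + (c*u-a*w)*(c*u-a*w) + (a*v-b*u)*(a*v-b*u) = 1 := by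
    linear_combination (u*u+v*v+w*w)*h1 + hu - (a*u+b*v+c*w)*hx
  have hMM : (!![a,b,c; u,v,w; b*w-c*v, c*u-a*w, a*v-b*u] : Matrix (Fin 3) (Fin 3) ℝ) *
      !![a,u,b*w-c*v; b,v,c*u-a*w; c,w,a*v-b*u] = 1 := by
    ext i j
    fin_cases i <;> fin_cases j <;>
      simp [Matrix.mul_apply, Fin.sum_univ_three, Matrix.one_apply] <;>
      first
        | linear_combination h1
        | linear_combination hu
        | linear_combination hx
        | linear_combination lag
        | ring
  have hcol : (!![a,u,b*w-c*v; b,v,c*u-a*w; c,w,a*v-b*u] : Matrix (Fin 3) (Fin 3) ℝ) *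
      !![a,b,c; u,v,w; b*w-c*v, c*u-a*w, a*v-b*u] = 1 := by
    rwa [mul_eq_one_comm] at hMM
  have key : ∀ i j : Fin 3,
      ((!![a,u,b*w-c*v; b,v,c*u-a*w; c,w,a*v-b*u] : Matrix (Fin 3) (Fin 3) ℝ) *
        !![a,b,c; u,v,w; b*w-c*v, c*u-a*w, a*v-b*u]) i j
        = (1 : Matrix (Fin 3) (Fin 3) ℝ) i j := by
    rw [hcol]; intro i j; rfl
  have g00 := key 0 0
  have g01 := key 0 1
  have g02 := key 0 2
  have g11 := key 1 1
  have g12 := key 1 2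
  have g22 := key 2 2
  simp [Matrix.mul_apply, Fin.sum_univ_three, Matrix.one_apply] at g00 g01 g02 g11 g12 g22
  exact ⟨lag, by linear_combination g00, by linear_combination g01, by linear_combination g02,
    by linear_combination g11, by linear_combination g12, by linear_combination g22⟩


/-- Let `J` be an orthogonal complex structure inducing the orientation, with
fundamental form `Ω(X,Y) = ⟨JX,Y⟩`, and let `φ` be a `J`-anti-invariant self-dual
2-form with `⟨φ,φ⟩ = 2`. Define `(Jφ)(X,Y) = -φ(JX,Y)`. Then `Jφ` is again a
`J`-anti-invariant self-dual 2-form and `{Ω/√2, φ/√2, Jφ/√2}` is an orthonormal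
basis of `Λ⁺`. -/
theorem stmt_13 (J : E →ₗ[ℝ] E) (hJ2 : ∀ x, J (J x) = -x)
    (hJo : ∀ x y : E, ⟪J x, J y⟫ = ⟪x, y⟫)
    (horient : 0 < ⟪J (e 0), e 1⟫ * ⟪J (e 2), e 3⟫ - ⟪J (e 0), e 2⟫ * ⟪J (e 1), e 3⟫
      + ⟪J (e 0), e 3⟫ * ⟪J (e 1), e 2⟫)
    (φ : E → E → ℝ) (hφ : IsTwoForm φ) (hsd : SelfDual φ)
    (hanti : ∀ x y, φ (J x) (J y) = -φ x y)
    (hnorm : formInner φ φ = 2) :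
    -- Jφ is a J-anti-invariant self-dual 2-form
    (IsTwoForm (fun x y => -φ (J x) y) ∧ SelfDual (fun x y => -φ (J x) y) ∧
      (∀ x y, -φ (J (J x)) (J y) = -(-φ (J x) y))) ∧
    -- orthonormality: all three have square-norm 2 and are mutually orthogonal
    (formInner (fun x y => ⟪J x, y⟫) (fun x y => ⟪J x, y⟫) = 2 ∧
      formInner (fun x y => -φ (J x) y) (fun x y => -φ (J x) y) = 2 ∧
      formInner (fun x y => ⟪J x, y⟫) φ = 0 ∧
      formInner (fun x y => ⟪J x, y⟫) (fun x y => -φ (J x) y) = 0 ∧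
      formInner φ (fun x y => -φ (J x) y) = 0) ∧
    -- they span the self-dual 2-forms
    (∀ ψ, IsTwoForm ψ → SelfDual ψ →
      ∃ c₁ c₂ c₃ : ℝ, ∀ x y,
        ψ x y = c₁ * ⟪J x, y⟫ + c₂ * φ x y + c₃ * (-φ (J x) y)) := by
  -- basic J facts
  have hJrel : ∀ x y : E, ⟪J x, y⟫ = -⟪J y, x⟫ := by
    intro x y
    have h := hJo x (J y)
    rw [hJ2 y, inner_neg_right] at h
    have hc := real_inner_comm x (J y)
    linarith
  have hm00 : ⟪J (e 0), e 0⟫ = 0 := by have := hJrel (e 0) (e 0); linarith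
  have hm11 : ⟪J (e 1), e 1⟫ = 0 := by have := hJrel (e 1) (e 1); linarith
  have hm22 : ⟪J (e 2), e 2⟫ = 0 := by have := hJrel (e 2) (e 2); linarith
  have hm33 : ⟪J (e 3), e 3⟫ = 0 := by have := hJrel (e 3) (e 3); linarith
  have hm10 : ⟪J (e 1), e 0⟫ = -⟪J (e 0), e 1⟫ := hJrel _ _
  have hm20 : ⟪J (e 2), e 0⟫ = -⟪J (e 0), e 2⟫ := hJrel _ _
  have hm30 : ⟪J (e 3), e 0⟫ = -⟪J (e 0), e 3⟫ := hJrel _ _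
  have hm21 : ⟪J (e 2), e 1⟫ = -⟪J (e 1), e 2⟫ := hJrel _ _
  have hm31 : ⟪J (e 3), e 1⟫ = -⟪J (e 1), e 3⟫ := hJrel _ _
  have hm32 : ⟪J (e 3), e 2⟫ = -⟪J (e 2), e 3⟫ := hJrel _ _
  have hrow : ∀ i j : Fin 4, (∑ k, ⟪J (e i), e k⟫ * ⟪J (e j), e k⟫) = ⟪(e i : E), e j⟫ := by
    intro i j
    have h := hJo (e i) (e j)
    rw [inner_sum' (J (e i)) (J (e j))] at h
    rw [← h]
    exact Finset.sum_congr rfl fun k _ => by rw [coord_inner, coord_inner]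
  have h00 := hrow 0 0
  have h11 := hrow 1 1
  have h22 := hrow 2 2
  have h33 := hrow 3 3
  have h01 := hrow 0 1
  have h02 := hrow 0 2
  have h03 := hrow 0 3
  have h12 := hrow 1 2
  have h13 := hrow 1 3
  have h23 := hrow 2 3
  simp only [Fin.sum_univ_four, inner_e, hm00, hm11, hm22, hm33, hm10, hm20, hm30, hm21,
    hm31, hm32, Fin.reduceEq, reduceIte] at h00 h11 h22 h33 h01 h02 h03 h12 h13 h23
  obtain ⟨hp, hq, hr⟩ := keyJ (⟪J (e 0), e 1⟫) (⟪J (e 0), e 2⟫) (⟪J (e 0), e 3⟫)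
    (⟪J (e 1), e 2⟫) (⟪J (e 1), e 3⟫) (⟪J (e 2), e 3⟫)
    (by linear_combination h00) (by linear_combination h11) (by linear_combination h22)
    (by linear_combination h33)
    (by first | linear_combination h01 | linear_combination -h01)
    (by first | linear_combination h02 | linear_combination -h02)
    (by first | linear_combination h03 | linear_combination -h03)
    (by first | linear_combination h12 | linear_combination -h12)
    (by first | linear_combination h13 | linear_combination -h13)
    (by first | linear_combination h23 | linear_combination -h23)
    horient
  have k1 : ⟪J (e 0), e 1⟫ * ⟪J (e 0), e 1⟫ + ⟪J (e 0), e 2⟫ * ⟪J (e 0), e 2⟫ +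
      ⟪J (e 0), e 3⟫ * ⟪J (e 0), e 3⟫ = 1 := by linear_combination h00
  have hm21' : ⟪J (e 2), e 1⟫ = -⟪J (e 0), e 3⟫ := by rw [hm21, hp]
  have hm31' : ⟪J (e 3), e 1⟫ = ⟪J (e 0), e 2⟫ := by rw [hm31, hq, neg_neg]
  have hm32' : ⟪J (e 3), e 2⟫ = -⟪J (e 0), e 1⟫ := by rw [hm32, hr]
  -- φ facts
  have hf00 : φ (e 0) (e 0) = 0 := by have := hφ.2.2 (e 0) (e 0); linarith
  have hf11 : φ (e 1) (e 1) = 0 := by have := hφ.2.2 (e 1) (e 1); linarith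
  have hf22 : φ (e 2) (e 2) = 0 := by have := hφ.2.2 (e 2) (e 2); linarith
  have hf33 : φ (e 3) (e 3) = 0 := by have := hφ.2.2 (e 3) (e 3); linarith
  have hf10 : φ (e 1) (e 0) = -φ (e 0) (e 1) := hφ.2.2 _ _
  have hf20 : φ (e 2) (e 0) = -φ (e 0) (e 2) := hφ.2.2 _ _
  have hf30 : φ (e 3) (e 0) = -φ (e 0) (e 3) := hφ.2.2 _ _
  have hf12 : φ (e 1) (e 2) = φ (e 0) (e 3) := hsd.2.2.symm
  have hf21 : φ (e 2) (e 1) = -φ (e 0) (e 3) := by rw [hφ.2.2 (e 2) (e 1), hf12]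
  have hf31 : φ (e 3) (e 1) = φ (e 0) (e 2) := hsd.2.1.symm
  have hf13 : φ (e 1) (e 3) = -φ (e 0) (e 2) := by rw [hφ.2.2 (e 1) (e 3), hf31]
  have hf23 : φ (e 2) (e 3) = φ (e 0) (e 1) := hsd.1.symm
  have hf32 : φ (e 3) (e 2) = -φ (e 0) (e 1) := by rw [hφ.2.2 (e 3) (e 2), hf23]
  have hφJ : ∀ x y, φ (J x) y = φ x (J y) := by
    intro x y
    have h2 := hanti x (J y)
    rw [hJ2 y] at h2
    have hneg : φ (J x) (-y) = -φ (J x) y := by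
      have h3 := hφ.2.1 (-1) y (J x)
      rw [neg_one_smul] at h3
      rw [hφ.2.2 (J x) (-y), h3, hφ.2.2 y (J x)]; ring
    rw [hneg] at h2; linarith
  have hzero : φ (J (e 0)) (e 0) = 0 := by
    have h1' := hφJ (e 0) (e 0)
    have h2' := hφ.2.2 (e 0) (J (e 0))
    linarith
  have hgen : ∀ i j : Fin 4, φ (J (e i)) (e j) = ∑ k, ⟪J (e i), e k⟫ * φ (e k) (e j) :=
    fun i j => tf_expand_basis hφ _ j
  have hX : ⟪J (e 0), e 1⟫ * φ (e 0) (e 1) + ⟪J (e 0), e 2⟫ * φ (e 0) (e 2) +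
      ⟪J (e 0), e 3⟫ * φ (e 0) (e 3) = 0 := by
    have h := hzero
    rw [hgen 0 0, Fin.sum_univ_four, hm00, hf00, hf10, hf20, hf30] at h
    first | linear_combination h | linear_combination -h
  have hUu : φ (e 0) (e 1) * φ (e 0) (e 1) + φ (e 0) (e 2) * φ (e 0) (e 2) +
      φ (e 0) (e 3) * φ (e 0) (e 3) = 1 := by
    have h := hnorm
    unfold formInner at h
    simp only [Fin.sum_univ_four, hf00, hf11, hf22, hf33, hf10, hf20, hf30, hf12, hf21,
      hf31, hf13, hf23, hf32] at h
    linear_combination h / 2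
  obtain ⟨lag, G11, G12, G13, G22, G23, G33⟩ :=
    gram6 (⟪J (e 0), e 1⟫) (⟪J (e 0), e 2⟫) (⟪J (e 0), e 3⟫)
      (φ (e 0) (e 1)) (φ (e 0) (e 2)) (φ (e 0) (e 3)) k1 hUu hX

  have hg00 : φ (J (e 0)) (e 0) = -((⟪J (e 0), e 1⟫) * (φ (e 0) (e 1)) + (⟪J (e 0), e 2⟫) * (φ (e 0) (e 2)) + (⟪J (e 0), e 3⟫) * (φ (e 0) (e 3))) := by
    rw [hgen 0 0, Fin.sum_univ_four]; simp only [hm00, hm11, hm22, hm33, hm10, hm20, hm30, hm21', hm31', hm32', hp, hq, hr,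
    hf00, hf11, hf22, hf33, hf10, hf20, hf30, hf12, hf21, hf31, hf13, hf23, hf32]; ring
  have hg01 : φ (J (e 0)) (e 1) = -((⟪J (e 0), e 2⟫) * (φ (e 0) (e 3)) - (⟪J (e 0), e 3⟫) * (φ (e 0) (e 2))) := by
    rw [hgen 0 1, Fin.sum_univ_four]; simp only [hm00, hm11, hm22, hm33, hm10, hm20, hm30, hm21', hm31', hm32', hp, hq, hr,
    hf00, hf11, hf22, hf33, hf10, hf20, hf30, hf12, hf21, hf31, hf13, hf23, hf32]; ring
  have hg02 : φ (J (e 0)) (e 2) = -((⟪J (e 0), e 3⟫) * (φ (e 0) (e 1)) - (⟪J (e 0), e 1⟫) * (φ (e 0) (e 3))) := by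
    rw [hgen 0 2, Fin.sum_univ_four]; simp only [hm00, hm11, hm22, hm33, hm10, hm20, hm30, hm21', hm31', hm32', hp, hq, hr,
    hf00, hf11, hf22, hf33, hf10, hf20, hf30, hf12, hf21, hf31, hf13, hf23, hf32]; ring
  have hg03 : φ (J (e 0)) (e 3) = -((⟪J (e 0), e 1⟫) * (φ (e 0) (e 2)) - (⟪J (e 0), e 2⟫) * (φ (e 0) (e 1))) := by
    rw [hgen 0 3, Fin.sum_univ_four]; simp only [hm00, hm11, hm22, hm33, hm10, hm20, hm30, hm21', hm31', hm32', hp, hq, hr,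
    hf00, hf11, hf22, hf33, hf10, hf20, hf30, hf12, hf21, hf31, hf13, hf23, hf32]; ring
  have hg10 : φ (J (e 1)) (e 0) = (⟪J (e 0), e 2⟫) * (φ (e 0) (e 3)) - (⟪J (e 0), e 3⟫) * (φ (e 0) (e 2)) := by
    rw [hgen 1 0, Fin.sum_univ_four]; simp only [hm00, hm11, hm22, hm33, hm10, hm20, hm30, hm21', hm31', hm32', hp, hq, hr,
    hf00, hf11, hf22, hf33, hf10, hf20, hf30, hf12, hf21, hf31, hf13, hf23, hf32]; ring
  have hg11 : φ (J (e 1)) (e 1) = -((⟪J (e 0), e 1⟫) * (φ (e 0) (e 1)) + (⟪J (e 0), e 2⟫) * (φ (e 0) (e 2)) + (⟪J (e 0), e 3⟫) * (φ (e 0) (e 3))) := by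
    rw [hgen 1 1, Fin.sum_univ_four]; simp only [hm00, hm11, hm22, hm33, hm10, hm20, hm30, hm21', hm31', hm32', hp, hq, hr,
    hf00, hf11, hf22, hf33, hf10, hf20, hf30, hf12, hf21, hf31, hf13, hf23, hf32]; ring
  have hg12 : φ (J (e 1)) (e 2) = -((⟪J (e 0), e 1⟫) * (φ (e 0) (e 2)) - (⟪J (e 0), e 2⟫) * (φ (e 0) (e 1))) := by
    rw [hgen 1 2, Fin.sum_univ_four]; simp only [hm00, hm11, hm22, hm33, hm10, hm20, hm30, hm21', hm31', hm32', hp, hq, hr,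
    hf00, hf11, hf22, hf33, hf10, hf20, hf30, hf12, hf21, hf31, hf13, hf23, hf32]; ring
  have hg13 : φ (J (e 1)) (e 3) = (⟪J (e 0), e 3⟫) * (φ (e 0) (e 1)) - (⟪J (e 0), e 1⟫) * (φ (e 0) (e 3)) := by
    rw [hgen 1 3, Fin.sum_univ_four]; simp only [hm00, hm11, hm22, hm33, hm10, hm20, hm30, hm21', hm31', hm32', hp, hq, hr,
    hf00, hf11, hf22, hf33, hf10, hf20, hf30, hf12, hf21, hf31, hf13, hf23, hf32]; ring
  have hg20 : φ (J (e 2)) (e 0) = (⟪J (e 0), e 3⟫) * (φ (e 0) (e 1)) - (⟪J (e 0), e 1⟫) * (φ (e 0) (e 3)) := by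
    rw [hgen 2 0, Fin.sum_univ_four]; simp only [hm00, hm11, hm22, hm33, hm10, hm20, hm30, hm21', hm31', hm32', hp, hq, hr,
    hf00, hf11, hf22, hf33, hf10, hf20, hf30, hf12, hf21, hf31, hf13, hf23, hf32]; ring
  have hg21 : φ (J (e 2)) (e 1) = (⟪J (e 0), e 1⟫) * (φ (e 0) (e 2)) - (⟪J (e 0), e 2⟫) * (φ (e 0) (e 1)) := by
    rw [hgen 2 1, Fin.sum_univ_four]; simp only [hm00, hm11, hm22, hm33, hm10, hm20, hm30, hm21', hm31', hm32', hp, hq, hr,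
    hf00, hf11, hf22, hf33, hf10, hf20, hf30, hf12, hf21, hf31, hf13, hf23, hf32]; ring
  have hg22 : φ (J (e 2)) (e 2) = -((⟪J (e 0), e 1⟫) * (φ (e 0) (e 1)) + (⟪J (e 0), e 2⟫) * (φ (e 0) (e 2)) + (⟪J (e 0), e 3⟫) * (φ (e 0) (e 3))) := by
    rw [hgen 2 2, Fin.sum_univ_four]; simp only [hm00, hm11, hm22, hm33, hm10, hm20, hm30, hm21', hm31', hm32', hp, hq, hr,
    hf00, hf11, hf22, hf33, hf10, hf20, hf30, hf12, hf21, hf31, hf13, hf23, hf32]; ring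
  have hg23 : φ (J (e 2)) (e 3) = -((⟪J (e 0), e 2⟫) * (φ (e 0) (e 3)) - (⟪J (e 0), e 3⟫) * (φ (e 0) (e 2))) := by
    rw [hgen 2 3, Fin.sum_univ_four]; simp only [hm00, hm11, hm22, hm33, hm10, hm20, hm30, hm21', hm31', hm32', hp, hq, hr,
    hf00, hf11, hf22, hf33, hf10, hf20, hf30, hf12, hf21, hf31, hf13, hf23, hf32]; ring
  have hg30 : φ (J (e 3)) (e 0) = (⟪J (e 0), e 1⟫) * (φ (e 0) (e 2)) - (⟪J (e 0), e 2⟫) * (φ (e 0) (e 1)) := by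
    rw [hgen 3 0, Fin.sum_univ_four]; simp only [hm00, hm11, hm22, hm33, hm10, hm20, hm30, hm21', hm31', hm32', hp, hq, hr,
    hf00, hf11, hf22, hf33, hf10, hf20, hf30, hf12, hf21, hf31, hf13, hf23, hf32]; ring
  have hg31 : φ (J (e 3)) (e 1) = -((⟪J (e 0), e 3⟫) * (φ (e 0) (e 1)) - (⟪J (e 0), e 1⟫) * (φ (e 0) (e 3))) := by
    rw [hgen 3 1, Fin.sum_univ_four]; simp only [hm00, hm11, hm22, hm33, hm10, hm20, hm30, hm21', hm31', hm32', hp, hq, hr,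
    hf00, hf11, hf22, hf33, hf10, hf20, hf30, hf12, hf21, hf31, hf13, hf23, hf32]; ring
  have hg32 : φ (J (e 3)) (e 2) = (⟪J (e 0), e 2⟫) * (φ (e 0) (e 3)) - (⟪J (e 0), e 3⟫) * (φ (e 0) (e 2)) := by
    rw [hgen 3 2, Fin.sum_univ_four]; simp only [hm00, hm11, hm22, hm33, hm10, hm20, hm30, hm21', hm31', hm32', hp, hq, hr,
    hf00, hf11, hf22, hf33, hf10, hf20, hf30, hf12, hf21, hf31, hf13, hf23, hf32]; ring
  have hg33 : φ (J (e 3)) (e 3) = -((⟪J (e 0), e 1⟫) * (φ (e 0) (e 1)) + (⟪J (e 0), e 2⟫) * (φ (e 0) (e 2)) + (⟪J (e 0), e 3⟫) * (φ (e 0) (e 3))) := by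
    rw [hgen 3 3, Fin.sum_univ_four]; simp only [hm00, hm11, hm22, hm33, hm10, hm20, hm30, hm21', hm31', hm32', hp, hq, hr,
    hf00, hf11, hf22, hf33, hf10, hf20, hf30, hf12, hf21, hf31, hf13, hf23, hf32]; ring
  -- Jφ is a two-form
  have hJphi : IsTwoForm (fun x y => -φ (J x) y) := by
    refine ⟨fun x y z => ?_, fun cc x y => ?_, fun x y => ?_⟩
    · show -φ (J (x + y)) z = -φ (J x) z + -φ (J y) z
      rw [J.map_add, hφ.1]; ring
    · show -φ (J (cc • x)) y = cc * -φ (J x) y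
      rw [J.map_smul, hφ.2.1]; ring
    · show -φ (J x) y = -(-φ (J y) x)
      rw [hφJ x y, hφ.2.2 x (J y)]
  refine ⟨⟨hJphi, ⟨?_, ?_, ?_⟩, fun x y => ?_⟩, ⟨?_, ?_, ?_, ?_, ?_⟩, ?_⟩
  · show -φ (J (e 0)) (e 1) = -φ (J (e 2)) (e 3)
    rw [hg01, hg23]
  · show -φ (J (e 0)) (e 2) = -φ (J (e 3)) (e 1)
    rw [hg02, hg31]
  · show -φ (J (e 0)) (e 3) = -φ (J (e 1)) (e 2)
    rw [hg03, hg12]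
  · -- anti-invariance of Jφ
    have hneg1 : φ (-x) (J y) = -φ x (J y) := by
      have h3 := hφ.2.1 (-1) x (J y)
      rw [neg_one_smul] at h3
      rw [h3]; ring
    rw [hJ2 x, hneg1, ← hφJ x y]
  · -- |Ω|² = 2
    unfold formInner
    simp only [Fin.sum_univ_four, hm00, hm11, hm22, hm33, hm10, hm20, hm30, hm21', hm31',
      hm32', hp, hq, hr]
    linear_combination 2 * k1
  · -- |Jφ|² = 2
    unfold formInner
    simp only [Fin.sum_univ_four, hg00, hg01, hg02, hg03, hg10, hg11, hg12, hg13, hg20,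
      hg21, hg22, hg23, hg30, hg31, hg32, hg33]
    linear_combination 2 * lag + 2 * (⟪J (e 0), e 1⟫ * φ (e 0) (e 1) +
      ⟪J (e 0), e 2⟫ * φ (e 0) (e 2) + ⟪J (e 0), e 3⟫ * φ (e 0) (e 3)) * hX
  · -- Ω ⟂ φ
    unfold formInner
    simp only [Fin.sum_univ_four, hm00, hm11, hm22, hm33, hm10, hm20, hm30, hm21', hm31',
      hm32', hp, hq, hr, hf00, hf11, hf22, hf33, hf10, hf20, hf30, hf12, hf21, hf31, hf13,
      hf23, hf32]
    linear_combination 2 * hX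
  · -- Ω ⟂ Jφ
    unfold formInner
    simp only [Fin.sum_univ_four, hg00, hg01, hg02, hg03, hg10, hg11, hg12, hg13, hg20,
      hg21, hg22, hg23, hg30, hg31, hg32, hg33, hm00, hm11, hm22, hm33, hm10, hm20, hm30,
      hm21', hm31', hm32', hp, hq, hr]
    ring
  · -- φ ⟂ Jφ
    unfold formInner
    simp only [Fin.sum_univ_four, hg00, hg01, hg02, hg03, hg10, hg11, hg12, hg13, hg20,
      hg21, hg22, hg23, hg30, hg31, hg32, hg33, hf00, hf11, hf22, hf33, hf10, hf20, hf30,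
      hf12, hf21, hf31, hf13, hf23, hf32]
    ring
  · -- spanning
    intro ψ hψ hψsd
    have hs00 : ψ (e 0) (e 0) = 0 := by have := hψ.2.2 (e 0) (e 0); linarith
    have hs11 : ψ (e 1) (e 1) = 0 := by have := hψ.2.2 (e 1) (e 1); linarith
    have hs22 : ψ (e 2) (e 2) = 0 := by have := hψ.2.2 (e 2) (e 2); linarith
    have hs33 : ψ (e 3) (e 3) = 0 := by have := hψ.2.2 (e 3) (e 3); linarith
    have hs10 : ψ (e 1) (e 0) = -ψ (e 0) (e 1) := hψ.2.2 _ _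
    have hs20 : ψ (e 2) (e 0) = -ψ (e 0) (e 2) := hψ.2.2 _ _
    have hs30 : ψ (e 3) (e 0) = -ψ (e 0) (e 3) := hψ.2.2 _ _
    have hs12 : ψ (e 1) (e 2) = ψ (e 0) (e 3) := hψsd.2.2.symm
    have hs21 : ψ (e 2) (e 1) = -ψ (e 0) (e 3) := by rw [hψ.2.2 (e 2) (e 1), hs12]
    have hs31 : ψ (e 3) (e 1) = ψ (e 0) (e 2) := hψsd.2.1.symm
    have hs13 : ψ (e 1) (e 3) = -ψ (e 0) (e 2) := by rw [hψ.2.2 (e 1) (e 3), hs31]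
    have hs23 : ψ (e 2) (e 3) = ψ (e 0) (e 1) := hψsd.1.symm
    have hs32 : ψ (e 3) (e 2) = -ψ (e 0) (e 1) := by rw [hψ.2.2 (e 3) (e 2), hs23]
    have hΩtf : IsTwoForm (fun x y => ⟪J x, y⟫) := by
      refine ⟨fun x y z => ?_, fun cc x y => ?_, fun x y => ?_⟩
      · show ⟪J (x + y), z⟫ = ⟪J x, z⟫ + ⟪J y, z⟫
        rw [J.map_add, inner_add_left]
      · show ⟪J (cc • x), y⟫ = cc * ⟪J x, y⟫
        rw [J.map_smul, real_inner_smul_left]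
      · exact hJrel x y
    refine ⟨⟪J (e 0), e 1⟫ * ψ (e 0) (e 1) + ⟪J (e 0), e 2⟫ * ψ (e 0) (e 2) +
        ⟪J (e 0), e 3⟫ * ψ (e 0) (e 3),
      φ (e 0) (e 1) * ψ (e 0) (e 1) + φ (e 0) (e 2) * ψ (e 0) (e 2) +
        φ (e 0) (e 3) * ψ (e 0) (e 3),
      (⟪J (e 0), e 2⟫ * φ (e 0) (e 3) - ⟪J (e 0), e 3⟫ * φ (e 0) (e 2)) * ψ (e 0) (e 1) +
        (⟪J (e 0), e 3⟫ * φ (e 0) (e 1) - ⟪J (e 0), e 1⟫ * φ (e 0) (e 3)) * ψ (e 0) (e 2) +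
        (⟪J (e 0), e 1⟫ * φ (e 0) (e 2) - ⟪J (e 0), e 2⟫ * φ (e 0) (e 1)) * ψ (e 0) (e 3),
      fun x y => ?_⟩
    have eψ := tf_expand hψ x y
    have eφ := tf_expand hφ x y
    have eΩ : ⟪J x, y⟫ = ∑ i, ∑ j, x i * y j * ⟪J (e i), e j⟫ := tf_expand hΩtf x y
    have eG : -φ (J x) y = ∑ i, ∑ j, x i * y j * -φ (J (e i)) (e j) := tf_expand hJphi x y
    rw [eψ, eφ, eΩ, eG]
    simp only [Fin.sum_univ_four, hs00, hs11, hs22, hs33, hs10, hs20, hs30, hs12, hs21,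
      hs31, hs13, hs23, hs32, hg00, hg01, hg02, hg03, hg10, hg11, hg12, hg13, hg20, hg21,
      hg22, hg23, hg30, hg31, hg32, hg33, hm00, hm11, hm22, hm33, hm10, hm20, hm30, hm21',
      hm31', hm32', hp, hq, hr, hf00, hf11, hf22, hf33, hf10, hf20, hf30, hf12, hf21, hf31,
      hf13, hf23, hf32]
    linear_combination
      -((x 0 * y 1 - x 1 * y 0 + x 2 * y 3 - x 3 * y 2) *
        (ψ (e 0) (e 1) * G11 + ψ (e 0) (e 2) * G12 + ψ (e 0) (e 3) * G13)) -
      (x 0 * y 2 - x 2 * y 0 + x 3 * y 1 - x 1 * y 3) *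
        (ψ (e 0) (e 1) * G12 + ψ (e 0) (e 2) * G22 + ψ (e 0) (e 3) * G23) -
      (x 0 * y 3 - x 3 * y 0 + x 1 * y 2 - x 2 * y 1) *
        (ψ (e 0) (e 1) * G13 + ψ (e 0) (e 2) * G23 + ψ (e 0) (e 3) * G33) -
      (x 0 * y 0 + x 1 * y 1 + x 2 * y 2 + x 3 * y 3) *
        ((⟪J (e 0), e 2⟫ * φ (e 0) (e 3) - ⟪J (e 0), e 3⟫ * φ (e 0) (e 2)) * ψ (e 0) (e 1) +
         (⟪J (e 0), e 3⟫ * φ (e 0) (e 1) - ⟪J (e 0), e 1⟫ * φ (e 0) (e 3)) * ψ (e 0) (e 2) +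
         (⟪J (e 0), e 1⟫ * φ (e 0) (e 2) - ⟪J (e 0), e 2⟫ * φ (e 0) (e 1)) * ψ (e 0) (e 3)) * hX

end
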